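/- For positive integers k ≤ n, the generating function P_{n,k}(t) := (1/L(n,k))·Σ_{j=k}^n t^j s(n,j) S(j,k) satisfies P_{n,k}(t) = (1/C(n-1,k-1))·Σ_{m=1}^{k} (-1)^{k-m} C(k,m)·(tm)(tm+1)···(tm+n-1)/n!, as an identity of polynomials in t. -/

import Mathlib

/-- Unsigned Stirling numbers of the first kind. -/
def stirling1 : ℕ → ℕ → ℕ
  | 0, 0 => 1
  | 0, _ + 1 => 0
  | _ + 1, 0 => 0
  | n + 1, k + 1 => stirling1 n k + n * stirling1 n (k + 1)

/-- Stirling numbers of the second kind. -/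
def stirling2 : ℕ → ℕ → ℕ
  | 0, 0 => 1
  | 0, _ + 1 => 0
  | _ + 1, 0 => 0
  | n + 1, k + 1 => stirling2 n k + (k + 1) * stirling2 n (k + 1)

open scoped BigOperators
/-- The Lah number `L(n,k) = (n!/k!)·C(n-1,k-1)`, as a rational number. -/
noncomputable def lahNumber (n k : ℕ) : ℚ :=
  (n.factorial : ℚ) / (k.factorial : ℚ) * ((n - 1).choose (k - 1) : ℚ)

lemma stirling2_eq_zero : ∀ {j k : ℕ}, j < k → stirling2 j k = 0 := by
  intro j
  induction j with
  | zero => intro k h; cases k with | zero => omega | succ k => rfl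
  | succ j ih =>
    intro k h
    cases k with
    | zero => omega
    | succ k =>
      show stirling2 j k + (k + 1) * stirling2 j (k+1) = 0
      rw [ih (by omega), ih (by omega)]
      ring

lemma stirling1_eq_zero : ∀ {n j : ℕ}, n < j → stirling1 n j = 0 := by
  intro n
  induction n with
  | zero => intro j h; cases j with | zero => omega | succ j => rfl
  | succ n ih =>
    intro j h
    cases j with
    | zero => omega
    | succ j =>
      show stirling1 n j + n * stirling1 n (j+1) = 0
      rw [ih (by omega), ih (by omega)]
      ring

lemma stirling1_zero_right : ∀ n : ℕ, n * stirling1 n 0 = 0 := by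
  intro n; cases n with
  | zero => rfl
  | succ n => show (n+1) * 0 = 0; ring

open Polynomial in
lemma risefac (n : ℕ) (y : ℚ[X]) :
    ∏ i ∈ Finset.range n, (y + C (i:ℚ)) =
      ∑ j ∈ Finset.range (n+1), (stirling1 n j : ℚ) • y ^ j := by
  induction n with
  | zero => simp [stirling1]
  | succ n ih =>
    rw [Finset.prod_range_succ, ih]
    have hs1 : ∀ j : ℕ, (stirling1 (n+1) (j+1) : ℚ) =
        (stirling1 n j : ℚ) + (n : ℚ) * (stirling1 n (j+1) : ℚ) := by
      intro j
      show ((stirling1 n j + n * stirling1 n (j+1) : ℕ) : ℚ) = _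
      push_cast; ring
    rw [Finset.sum_range_succ' (fun j => (stirling1 (n+1) j : ℚ) • y ^ j)]
    have h0 : (stirling1 (n+1) 0 : ℚ) = 0 := by
      show ((0:ℕ):ℚ) = 0; norm_num
    rw [h0, zero_smul, add_zero]
    rw [mul_add]
    have h1 : (∑ j ∈ Finset.range (n+1), (stirling1 n j : ℚ) • y ^ j) * y
        = ∑ j ∈ Finset.range (n+1), (stirling1 n j : ℚ) • y ^ (j+1) := by
      rw [Finset.sum_mul]
      exact Finset.sum_congr rfl fun j _ => by rw [smul_mul_assoc, pow_succ]
    have h2 : (∑ j ∈ Finset.range (n+1), (stirling1 n j : ℚ) • y ^ j) * C (n:ℚ)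
        = ∑ j ∈ Finset.range (n+1), ((n:ℚ) * stirling1 n j) • y ^ j := by
      rw [Finset.sum_mul]
      refine Finset.sum_congr rfl fun j _ => ?_
      rw [smul_mul_assoc, mul_comm, ← Polynomial.smul_eq_C_mul, smul_smul]
      ring_nf
    rw [h1, h2]
    rw [Finset.sum_range_succ' (fun j => ((n:ℚ) * stirling1 n j) • y ^ j)]
    have h3 : ((n:ℚ) * stirling1 n 0) • y ^ 0 = 0 := by
      have := stirling1_zero_right n
      have : (n:ℚ) * stirling1 n 0 = 0 := by
        have h := congrArg (fun x : ℕ => (x:ℚ)) this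
        push_cast at h; linarith [h]
      rw [this, zero_smul]
    rw [h3, add_zero]
    have h4 : ∑ j ∈ Finset.range (n+1), (stirling1 (n+1) (j+1) : ℚ) • y ^ (j+1)
        = ∑ j ∈ Finset.range (n+1), ((stirling1 n j : ℚ) • y ^ (j+1)
            + ((n:ℚ) * stirling1 n (j+1)) • y ^ (j+1)) := by
      refine Finset.sum_congr rfl fun j _ => ?_
      rw [hs1 j, add_smul]
    rw [h4, Finset.sum_add_distrib]
    congr 1
    rw [Finset.sum_range_succ (fun j => ((n:ℚ) * stirling1 n (j+1)) • y ^ (j+1))]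
    rw [stirling1_eq_zero (show n < n+1 by omega)]
    simp

noncomputable def Asum (j k : ℕ) : ℚ :=
  ∑ m ∈ Finset.range (k+1), (-1:ℚ)^(k+m) * (k.choose m) * (m:ℚ)^j

lemma sumB (j k : ℕ) :
    ∑ m ∈ Finset.range (k+1), (-1:ℚ)^(k+m) * (k.choose m) * ((m:ℚ)+1)^j
      = Asum j (k+1) + Asum j k := by
  have hA1 : Asum j (k+1)
      = ∑ m ∈ Finset.range (k+1), (-1:ℚ)^(k+m) * ((k+1).choose (m+1)) * ((m:ℚ)+1)^j
        + (-1:ℚ)^(k+1) * (0:ℚ)^j := by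
    rw [Asum, Finset.sum_range_succ'
      (fun m => (-1:ℚ)^(k+1+m) * ((k+1).choose m) * (m:ℚ)^j)]
    congr 1
    · refine Finset.sum_congr rfl fun m _ => ?_
      have : (-1:ℚ)^(k+1+(m+1)) = (-1:ℚ)^(k+m) := by
        rw [show k+1+(m+1) = (k+m)+2 by ring, pow_add]; norm_num
      rw [this]; push_cast; ring
    · simp
  have hA0 : Asum j k
      = - ∑ m ∈ Finset.range k, (-1:ℚ)^(k+m) * (k.choose (m+1)) * ((m:ℚ)+1)^j
        + (-1:ℚ)^k * (0:ℚ)^j := by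
    rw [Asum, Finset.sum_range_succ'
      (fun m => (-1:ℚ)^(k+m) * (k.choose m) * (m:ℚ)^j)]
    rw [← Finset.sum_neg_distrib]
    congr 1
    · refine Finset.sum_congr rfl fun m _ => ?_
      have : (-1:ℚ)^(k+(m+1)) = -(-1:ℚ)^(k+m) := by
        rw [show k+(m+1) = (k+m)+1 by ring, pow_succ]; ring
      rw [this]; push_cast; ring
    · simp
  have hpascal : ∀ m : ℕ, (((k+1).choose (m+1) : ℕ) : ℚ)
      = (k.choose m : ℚ) + (k.choose (m+1) : ℚ) := by
    intro m
    rw [Nat.choose_succ_succ]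
    push_cast; ring
  have hsplit : ∑ m ∈ Finset.range (k+1), (-1:ℚ)^(k+m) * ((k+1).choose (m+1)) * ((m:ℚ)+1)^j
      = ∑ m ∈ Finset.range (k+1), (-1:ℚ)^(k+m) * (k.choose m) * ((m:ℚ)+1)^j
        + ∑ m ∈ Finset.range (k+1), (-1:ℚ)^(k+m) * (k.choose (m+1)) * ((m:ℚ)+1)^j := by
    rw [← Finset.sum_add_distrib]
    refine Finset.sum_congr rfl fun m _ => ?_
    rw [hpascal m]; ring
  have hlast : ∑ m ∈ Finset.range (k+1), (-1:ℚ)^(k+m) * (k.choose (m+1)) * ((m:ℚ)+1)^j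
      = ∑ m ∈ Finset.range k, (-1:ℚ)^(k+m) * (k.choose (m+1)) * ((m:ℚ)+1)^j := by
    rw [Finset.sum_range_succ]
    rw [Nat.choose_succ_self]
    norm_num
  rw [hA1, hsplit, hlast, hA0]
  have hsgn : (-1:ℚ)^(k+1) = -(-1:ℚ)^k := by rw [pow_succ]; ring
  rw [hsgn]
  ring

lemma sumA : ∀ (j k : ℕ), Asum j k = (k.factorial : ℚ) * (stirling2 j k : ℚ) := by
  intro j
  induction j with
  | zero =>
    intro k
    cases k with
    | zero => simp [Asum, stirling2]
    | succ k =>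
      have hz : (stirling2 0 (k+1) : ℚ) = 0 := by
        rw [stirling2_eq_zero (by omega)]; norm_num
      rw [hz, mul_zero, Asum]
      have halt : ∑ m ∈ Finset.range (k+2), (-1:ℚ)^m * ((k+1).choose m) = 0 := by
        have h := add_pow (-1 : ℚ) 1 (k+1)
        simp only [one_pow, mul_one] at h
        rw [show (-1:ℚ) + 1 = 0 by ring, zero_pow (by omega : k+1 ≠ 0)] at h
        rw [← h]
      calc ∑ m ∈ Finset.range (k+2), (-1:ℚ)^(k+1+m) * ((k+1).choose m) * (m:ℚ)^0
          = (-1:ℚ)^(k+1) * ∑ m ∈ Finset.range (k+2), (-1:ℚ)^m * ((k+1).choose m) := by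
            rw [Finset.mul_sum]
            refine Finset.sum_congr rfl fun m _ => ?_
            rw [pow_add]; ring
        _ = 0 := by rw [halt, mul_zero]
  | succ j ih =>
    intro k
    cases k with
    | zero =>
      have : stirling2 (j+1) 0 = 0 := rfl
      simp [Asum, this]
    | succ k =>
      have step : Asum (j+1) (k+1)
          = ((k:ℚ)+1) * ∑ m ∈ Finset.range (k+1),
              (-1:ℚ)^(k+m) * (k.choose m) * ((m:ℚ)+1)^j := by
        rw [Asum, Finset.sum_range_succ'
          (fun m => (-1:ℚ)^(k+1+m) * ((k+1).choose m) * (m:ℚ)^(j+1))]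
        rw [Finset.mul_sum]
        have h0 : (-1:ℚ)^(k+1+0) * ((k+1).choose 0) * ((0:ℕ):ℚ)^(j+1) = 0 := by
          simp
        rw [h0, add_zero]
        refine Finset.sum_congr rfl fun m _ => ?_
        have hsgn : (-1:ℚ)^(k+1+(m+1)) = (-1:ℚ)^(k+m) := by
          rw [show k+1+(m+1) = (k+m)+2 by ring, pow_add]; norm_num
        have hch : (((k+1).choose (m+1) : ℕ) : ℚ) * ((m:ℚ)+1)
            = ((k:ℚ)+1) * (k.choose m : ℚ) := by
          have := Nat.add_one_mul_choose_eq k m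
          have h := congrArg (fun x : ℕ => (x:ℚ)) this
          push_cast at h
          linarith [h]
        rw [hsgn]
        push_cast
        calc (-1:ℚ)^(k+m) * ((k+1).choose (m+1)) * ((m:ℚ)+1)^(j+1)
            = (-1:ℚ)^(k+m) * ((((k+1).choose (m+1) : ℕ):ℚ) * ((m:ℚ)+1)) * ((m:ℚ)+1)^j := by
              rw [pow_succ]; push_cast; ring
          _ = ((k:ℚ)+1) * ((-1:ℚ)^(k+m) * (k.choose m) * ((m:ℚ)+1)^j) := by
              rw [hch]; ring
      rw [step, sumB, ih, ih]
      have hS : (stirling2 (j+1) (k+1) : ℚ)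
          = (stirling2 j k : ℚ) + ((k:ℚ)+1) * (stirling2 j (k+1) : ℚ) := by
        show ((stirling2 j k + (k+1) * stirling2 j (k+1) : ℕ) : ℚ) = _
        push_cast; ring
      have hF : ((k+1).factorial : ℚ) = ((k:ℚ)+1) * (k.factorial : ℚ) := by
        rw [Nat.factorial_succ]; push_cast; ring
      rw [hS, hF]
      ring

lemma key_sum (n k j : ℕ) (hk : 1 ≤ k) (hn : 1 ≤ n) :
    (stirling1 n j : ℚ) * ∑ m ∈ Finset.Icc 1 k,
        (-1:ℚ)^(k-m) * (k.choose m : ℚ) * (m:ℚ)^j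
      = (stirling1 n j : ℚ) * ((k.factorial : ℚ) * (stirling2 j k : ℚ)) := by
  cases j with
  | zero =>
    obtain ⟨n', rfl⟩ : ∃ n', n = n' + 1 := ⟨n - 1, by omega⟩
    have : (stirling1 (n'+1) 0 : ℚ) = 0 := by norm_num [stirling1]
    rw [this]; ring
  | succ j =>
    congr 1
    have hsgn : ∀ m ∈ Finset.Icc 1 k,
        (-1:ℚ)^(k-m) * (k.choose m : ℚ) * (m:ℚ)^(j+1)
          = (-1:ℚ)^(k+m) * (k.choose m : ℚ) * (m:ℚ)^(j+1) := by
      intro m hm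
      rw [Finset.mem_Icc] at hm
      have h2 : (-1:ℚ)^(k+m) = (-1:ℚ)^(k-m) := by
        have h3 : k + m = (k - m) + 2*m := by omega
        rw [h3, pow_add, pow_mul]
        norm_num
      rw [h2]
    rw [Finset.sum_congr rfl hsgn]
    rw [Finset.sum_subset (show Finset.Icc 1 k ⊆ Finset.range (k+1) by
      intro x hx; rw [Finset.mem_Icc] at hx; rw [Finset.mem_range]; omega)]
    · exact sumA (j+1) k
    · intro x hx hnx
      rw [Finset.mem_range] at hx
      rw [Finset.mem_Icc] at hnx
      have : x = 0 := by omega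
      subst this
      norm_num

open Polynomial in
theorem stmt_3 (n k : ℕ) (hk : 1 ≤ k) (hkn : k ≤ n) :
    (lahNumber n k)⁻¹ •
        (∑ j ∈ Finset.Icc k n, ((stirling1 n j * stirling2 j k : ℚ)) • (X : ℚ[X]) ^ j) =
      (((n - 1).choose (k - 1) : ℚ))⁻¹ •
        ∑ m ∈ Finset.Icc 1 k,
          ((-1 : ℚ) ^ (k - m) * (k.choose m : ℚ) / (n.factorial : ℚ)) •
            ∏ i ∈ Finset.range n, (Polynomial.C (m : ℚ) * X + Polynomial.C (i : ℚ)) := by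
  have hn : 1 ≤ n := le_trans hk hkn
  have hCq : ((n - 1).choose (k - 1) : ℚ) ≠ 0 := by
    have : 0 < (n-1).choose (k-1) := Nat.choose_pos (by omega)
    positivity
  have hnf : (n.factorial : ℚ) ≠ 0 := by positivity
  have hkf : (k.factorial : ℚ) ≠ 0 := by positivity
  -- rewrite LHS as a sum over range (n+1)
  have lhs_eq : (lahNumber n k)⁻¹ •
      (∑ j ∈ Finset.Icc k n, ((stirling1 n j * stirling2 j k : ℚ)) • (X : ℚ[X]) ^ j)
      = ∑ j ∈ Finset.range (n+1),
          ((lahNumber n k)⁻¹ * (stirling1 n j * stirling2 j k : ℚ)) • (X : ℚ[X]) ^ j := by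
    rw [Finset.smul_sum]
    rw [Finset.sum_subset (show Finset.Icc k n ⊆ Finset.range (n+1) by
      intro x hx; rw [Finset.mem_Icc] at hx; rw [Finset.mem_range]; omega)]
    · exact Finset.sum_congr rfl fun j _ => by rw [smul_smul]
    · intro x hx hnx
      rw [Finset.mem_range] at hx
      rw [Finset.mem_Icc] at hnx
      have hxk : x < k := by omega
      rw [stirling2_eq_zero hxk]
      norm_num
  -- rewrite RHS
  have rhs_eq : (((n - 1).choose (k - 1) : ℚ))⁻¹ •
      (∑ m ∈ Finset.Icc 1 k,
          ((-1 : ℚ) ^ (k - m) * (k.choose m : ℚ) / (n.factorial : ℚ)) •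
            ∏ i ∈ Finset.range n, (Polynomial.C (m : ℚ) * X + Polynomial.C (i : ℚ)))
      = ∑ j ∈ Finset.range (n+1),
          ((((n - 1).choose (k - 1) : ℚ))⁻¹ *
            ∑ m ∈ Finset.Icc 1 k,
              ((-1 : ℚ) ^ (k - m) * (k.choose m : ℚ) / (n.factorial : ℚ)) *
                ((stirling1 n j : ℚ) * (m:ℚ)^j)) • (X : ℚ[X]) ^ j := by
    have hprod : ∀ m : ℕ,
        (∏ i ∈ Finset.range n, (Polynomial.C (m : ℚ) * X + Polynomial.C (i : ℚ)))
          = ∑ j ∈ Finset.range (n+1),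
              ((stirling1 n j : ℚ) * (m:ℚ)^j) • (X : ℚ[X]) ^ j := by
      intro m
      rw [risefac n (Polynomial.C (m : ℚ) * X)]
      refine Finset.sum_congr rfl fun j _ => ?_
      rw [mul_pow, ← Polynomial.C_pow, Polynomial.smul_eq_C_mul,
        Polynomial.smul_eq_C_mul, Polynomial.C_mul]
      ring
    rw [Finset.smul_sum]
    have step1 : ∀ m ∈ Finset.Icc 1 k,
        (((n - 1).choose (k - 1) : ℚ))⁻¹ •
          (((-1 : ℚ) ^ (k - m) * (k.choose m : ℚ) / (n.factorial : ℚ)) •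
            ∏ i ∈ Finset.range n, (Polynomial.C (m : ℚ) * X + Polynomial.C (i : ℚ)))
        = ∑ j ∈ Finset.range (n+1),
            ((((n - 1).choose (k - 1) : ℚ))⁻¹ *
              (((-1 : ℚ) ^ (k - m) * (k.choose m : ℚ) / (n.factorial : ℚ)) *
                ((stirling1 n j : ℚ) * (m:ℚ)^j))) • (X : ℚ[X]) ^ j := by
      intro m _
      rw [hprod m, Finset.smul_sum, Finset.smul_sum]
      exact Finset.sum_congr rfl fun j _ => by rw [smul_smul, smul_smul, mul_assoc]
    rw [Finset.sum_congr rfl step1, Finset.sum_comm]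
    refine Finset.sum_congr rfl fun j _ => ?_
    rw [Finset.mul_sum, Finset.sum_smul]
  rw [lhs_eq, rhs_eq]
  refine Finset.sum_congr rfl fun j _ => ?_
  congr 1
  -- scalar identity
  have hfac : ∀ m ∈ Finset.Icc 1 k,
      ((-1 : ℚ) ^ (k - m) * (k.choose m : ℚ) / (n.factorial : ℚ)) *
        ((stirling1 n j : ℚ) * (m:ℚ)^j)
      = ((stirling1 n j : ℚ) / (n.factorial : ℚ)) *
          ((-1:ℚ)^(k-m) * (k.choose m : ℚ) * (m:ℚ)^j) := by
    intro m _
    ring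
  rw [Finset.sum_congr rfl hfac, ← Finset.mul_sum]
  have hkey := key_sum n k j hk hn
  have : ((stirling1 n j : ℚ) / (n.factorial : ℚ)) *
      ∑ m ∈ Finset.Icc 1 k, (-1:ℚ)^(k-m) * (k.choose m : ℚ) * (m:ℚ)^j
      = ((stirling1 n j : ℚ) * ((k.factorial : ℚ) * (stirling2 j k : ℚ))) / (n.factorial : ℚ) := by
    rw [div_mul_eq_mul_div, hkey]
  rw [this]
  rw [lahNumber]
  field_simp
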